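/- On 𝒜, the angle function α (the angle opposite the side of length a = eˣ) is differentiable, and its differential at (x,y,z) ∈ 𝒜 is dα = cot γ·(dx − dy) + cot β·(dx − dz); that is, ∂α/∂x = cot β + cot γ, ∂α/∂y = −cot γ, ∂α/∂z = −cot β. -/

import Mathlib

open Real

/-- Milnor's Lobachevsky function. -/
noncomputable def Lob (x : ℝ) : ℝ := -∫ t in (0:ℝ)..x, Real.log |2 * Real.sin t|

/-- Angle opposite the side of length `a` in a euclidean triangle with side
lengths `a`, `b`, `c`, given by the arccos formula (which, since `Real.arccos`
clamps, also implements the broken-triangle convention: the angle opposite a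
too-long side is `π` and the other two angles are `0`). -/
noncomputable def eang (a b c : ℝ) : ℝ := Real.arccos ((b^2 + c^2 - a^2) / (2*b*c))

/-- The open domain `𝒜` where `eˣ, e^y, e^z` satisfy the strict triangle
inequalities. -/
def Adom : Set (ℝ × ℝ × ℝ) :=
  {p | Real.exp p.1 < Real.exp p.2.1 + Real.exp p.2.2 ∧
       Real.exp p.2.1 < Real.exp p.2.2 + Real.exp p.1 ∧
       Real.exp p.2.2 < Real.exp p.1 + Real.exp p.2.1}

/-- The triangle function `f(x,y,z) = αx + βy + γz + Л(α) + Л(β) + Л(γ)`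
(extended to all of `ℝ³` by the broken-triangle convention). -/
noncomputable def fTri (p : ℝ × ℝ × ℝ) : ℝ :=
  eang (Real.exp p.1) (Real.exp p.2.1) (Real.exp p.2.2) * p.1 +
  eang (Real.exp p.2.1) (Real.exp p.2.2) (Real.exp p.1) * p.2.1 +
  eang (Real.exp p.2.2) (Real.exp p.1) (Real.exp p.2.1) * p.2.2 +
  Lob (eang (Real.exp p.1) (Real.exp p.2.1) (Real.exp p.2.2)) +
  Lob (eang (Real.exp p.2.1) (Real.exp p.2.2) (Real.exp p.1)) +
  Lob (eang (Real.exp p.2.2) (Real.exp p.1) (Real.exp p.2.1))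

set_option maxHeartbeats 2000000 in
/-- On `𝒜`, the angle function `α` is differentiable with differential
`dα = cot γ·(dx − dy) + cot β·(dx − dz)`. -/
theorem alpha_hasFDerivAt (p : ℝ × ℝ × ℝ) (hp : p ∈ Adom) :
    ∃ L : ℝ × ℝ × ℝ →L[ℝ] ℝ,
      HasFDerivAt (fun q : ℝ × ℝ × ℝ =>
        eang (Real.exp q.1) (Real.exp q.2.1) (Real.exp q.2.2)) L p ∧
      ∀ s t r : ℝ, L (s, t, r) =
        Real.cot (eang (Real.exp p.2.2) (Real.exp p.1) (Real.exp p.2.1)) * (s - t) +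
        Real.cot (eang (Real.exp p.2.1) (Real.exp p.2.2) (Real.exp p.1)) * (s - r) := by
  obtain ⟨h1, h2, h3⟩ := hp
  set a := Real.exp p.1 with ha_def
  set b := Real.exp p.2.1 with hb_def
  set c := Real.exp p.2.2 with hc_def
  have ha : 0 < a := Real.exp_pos _
  have hb : 0 < b := Real.exp_pos _
  have hc : 0 < c := Real.exp_pos _
  set K := (a+b+c)*(-a+b+c)*(a-b+c)*(a+b-c) with hK_def
  have hKpos : 0 < K := by
    have f1 : 0 < a+b+c := by linarith
    have f2 : 0 < -a+b+c := by linarith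
    have f3 : 0 < a-b+c := by linarith
    have f4 : 0 < a+b-c := by linarith
    positivity
  set w := Real.sqrt K with hw_def
  have hw : 0 < w := Real.sqrt_pos.2 hKpos
  have hw2 : w^2 = K := Real.sq_sqrt hKpos.le
  set u := (b^2 + c^2 - a^2) / (2*b*c) with hu_def
  set vβ := (c^2 + a^2 - b^2) / (2*c*a) with hvb_def
  set vγ := (a^2 + b^2 - c^2) / (2*a*b) with hvg_def
  have hu_lt : u < 1 := by
    rw [hu_def, div_lt_one (by positivity)]
    nlinarith [sq_nonneg (b - c), mul_pos hb hc]
  have hu_gt : -1 < u := by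
    rw [hu_def, lt_div_iff₀ (by positivity)]
    nlinarith [mul_pos hb hc]
  have hvb_le : -1 ≤ vβ ∧ vβ ≤ 1 := by
    constructor
    · rw [hvb_def, le_div_iff₀ (by positivity)]
      nlinarith [mul_pos hc ha]
    · rw [hvb_def, div_le_one (by positivity)]
      nlinarith [mul_pos hc ha]
  have hvg_le : -1 ≤ vγ ∧ vγ ≤ 1 := by
    constructor
    · rw [hvg_def, le_div_iff₀ (by positivity)]
      nlinarith [mul_pos ha hb]
    · rw [hvg_def, div_le_one (by positivity)]
      nlinarith [mul_pos ha hb]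
  have sqrt_u : Real.sqrt (1 - u^2) = w / (2*b*c) := by
    have h : 1 - u^2 = (w / (2*b*c))^2 := by
      rw [hu_def, div_pow, div_pow, hw2, hK_def]
      field_simp
      ring
    rw [h, Real.sqrt_sq (by positivity)]
  have sqrt_vb : Real.sqrt (1 - vβ^2) = w / (2*c*a) := by
    have h : 1 - vβ^2 = (w / (2*c*a))^2 := by
      rw [hvb_def, div_pow, div_pow, hw2, hK_def]
      field_simp
      ring
    rw [h, Real.sqrt_sq (by positivity)]
  have sqrt_vg : Real.sqrt (1 - vγ^2) = w / (2*a*b) := by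
    have h : 1 - vγ^2 = (w / (2*a*b))^2 := by
      rw [hvg_def, div_pow, div_pow, hw2, hK_def]
      field_simp
      ring
    rw [h, Real.sqrt_sq (by positivity)]
  -- projections
  set π₁ : ℝ × ℝ × ℝ →L[ℝ] ℝ := ContinuousLinearMap.fst ℝ ℝ (ℝ × ℝ) with hπ₁
  set π₂ : ℝ × ℝ × ℝ →L[ℝ] ℝ :=
    (ContinuousLinearMap.fst ℝ ℝ ℝ).comp (ContinuousLinearMap.snd ℝ ℝ (ℝ × ℝ)) with hπ₂
  set π₃ : ℝ × ℝ × ℝ →L[ℝ] ℝ :=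
    (ContinuousLinearMap.snd ℝ ℝ ℝ).comp (ContinuousLinearMap.snd ℝ ℝ (ℝ × ℝ)) with hπ₃
  have hx : HasFDerivAt (fun q : ℝ × ℝ × ℝ => q.1) π₁ p := hasFDerivAt_fst
  have hy : HasFDerivAt (fun q : ℝ × ℝ × ℝ => q.2.1) π₂ p :=
    hasFDerivAt_fst.comp p hasFDerivAt_snd
  have hz : HasFDerivAt (fun q : ℝ × ℝ × ℝ => q.2.2) π₃ p :=
    hasFDerivAt_snd.comp p hasFDerivAt_snd
  have hea : HasFDerivAt (fun q : ℝ × ℝ × ℝ => Real.exp q.1) (a • π₁) p :=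
    (Real.hasDerivAt_exp p.1).comp_hasFDerivAt p hx
  have heb : HasFDerivAt (fun q : ℝ × ℝ × ℝ => Real.exp q.2.1) (b • π₂) p :=
    by have := (Real.hasDerivAt_exp p.2.1).comp_hasFDerivAt p hy; exact this
  have hec : HasFDerivAt (fun q : ℝ × ℝ × ℝ => Real.exp q.2.2) (c • π₃) p :=
    by have := (Real.hasDerivAt_exp p.2.2).comp_hasFDerivAt p hz; exact this
  have hea2 : HasFDerivAt (fun q : ℝ × ℝ × ℝ => Real.exp q.1 ^ 2)
      (a • (a • π₁) + a • (a • π₁)) p := by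
    have := hea.fun_mul hea
    simpa [sq] using this
  have heb2 : HasFDerivAt (fun q : ℝ × ℝ × ℝ => Real.exp q.2.1 ^ 2)
      (b • (b • π₂) + b • (b • π₂)) p := by
    have := heb.fun_mul heb
    simpa [sq] using this
  have hec2 : HasFDerivAt (fun q : ℝ × ℝ × ℝ => Real.exp q.2.2 ^ 2)
      (c • (c • π₃) + c • (c • π₃)) p := by
    have := hec.fun_mul hec
    simpa [sq] using this
  have hN := (heb2.add hec2).sub hea2
  have hM : HasFDerivAt (fun q : ℝ × ℝ × ℝ => 2 * Real.exp q.2.1 * Real.exp q.2.2)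
      ((2 * b) • (c • π₃) + c • ((2:ℝ) • (b • π₂))) p :=
    (heb.const_mul (2:ℝ)).mul hec
  have hMne : (2 * b * c : ℝ) ≠ 0 := by positivity
  have hMi : HasFDerivAt (fun q : ℝ × ℝ × ℝ => (2 * Real.exp q.2.1 * Real.exp q.2.2)⁻¹)
      ((-((2*b*c)^2)⁻¹) • ((2 * b) • (c • π₃) + c • ((2:ℝ) • (b • π₂)))) p := by
    exact (hasDerivAt_inv hMne).comp_hasFDerivAt p hM
  have hQ : HasFDerivAt (fun q : ℝ × ℝ × ℝ =>
      (Real.exp q.2.1 ^ 2 + Real.exp q.2.2 ^ 2 - Real.exp q.1 ^ 2) /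
        (2 * Real.exp q.2.1 * Real.exp q.2.2))
      ((b^2 + c^2 - a^2) • ((-((2*b*c)^2)⁻¹) • ((2 * b) • (c • π₃) + c • ((2:ℝ) • (b • π₂)))) +
        ((2*b*c)⁻¹) • ((b • (b • π₂) + b • (b • π₂) + (c • (c • π₃) + c • (c • π₃))) -
          (a • (a • π₁) + a • (a • π₁)))) p := by
    have := hN.fun_mul hMi
    simpa only [div_eq_mul_inv, Pi.add_apply, Pi.sub_apply] using this
  have harc : HasDerivAt Real.arccos (-(1 / Real.sqrt (1 - u ^ 2))) u :=
    Real.hasDerivAt_arccos (by linarith) (by linarith)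
  have hcomp := harc.comp_hasFDerivAt p hQ
  refine ⟨_, hcomp, ?_⟩
  intro s t r
  have cotg : Real.cot (eang c a b) = vγ * (2*a*b) / w := by
    rw [Real.cot_eq_cos_div_sin, eang, Real.cos_arccos hvg_le.1 hvg_le.2, Real.sin_arccos]
    rw [show ((a^2 + b^2 - c^2) / (2*a*b)) = vγ from rfl, sqrt_vg]
    field_simp
  have cotb : Real.cot (eang b c a) = vβ * (2*c*a) / w := by
    rw [Real.cot_eq_cos_div_sin, eang, Real.cos_arccos hvb_le.1 hvb_le.2, Real.sin_arccos]
    rw [show ((c^2 + a^2 - b^2) / (2*c*a)) = vβ from rfl, sqrt_vb]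
    field_simp
  rw [cotg, cotb, sqrt_u]
  simp only [ContinuousLinearMap.smul_apply, ContinuousLinearMap.sub_apply,
    ContinuousLinearMap.add_apply, ContinuousLinearMap.comp_apply,
    ContinuousLinearMap.coe_fst', ContinuousLinearMap.coe_snd',
    hπ₁, hπ₂, hπ₃, smul_eq_mul]
  rw [hvb_def, hvg_def]
  have hw0 : w ≠ 0 := ne_of_gt hw
  field_simp
  ring_nf
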